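/- Suppose the multi-time Lagrangian 1-form is Legendre transformable, i.e., there exist smooth functions V_1, …, V_m : ℝ^N × ℝ^N → ℝ^N such that for all (x,p) ∈ ℝ^N × ℝ^N: ∂L_α/∂v_β(x, V_1(x,p), …, V_m(x,p)) = 0 for all α ≠ β, and ∂L_α/∂v_α(x, V_1(x,p), …, V_m(x,p)) = p for all α. Define the Hamilton functions H_α(x,p) = ⟨p, V_α(x,p)⟩ − L_α(x, V_1(x,p), …, V_m(x,p)). Let x, p : ℝ^m → ℝ^N be smooth functions satisfying the multi-time Euler–Lagrange equations, that is, x_{t_α} = V_α(x, p) and ∂p/∂t_α = ∂L_α/∂x(x, x_{t_1}, …, x_{t_m}) for all α = 1, …, m. Then x and p satisfy the Hamiltonian equations of motion ∂x/∂t_α = ∂H_α/∂p(x,p) and ∂p/∂t_α = −∂H_α/∂x(x,p) for all α = 1, …, m. -/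

import Mathlib

noncomputable section

/-- Partial derivative `x_{t_α}` of a multi-time function. -/
def pdv {m N : ℕ} (x : (Fin m → ℝ) → (Fin N → ℝ)) (α : Fin m) (t : Fin m → ℝ) :
    Fin N → ℝ :=
  fderiv ℝ x t (Pi.single α 1)

/-- The first jet `(x_{t_1}, …, x_{t_m})` of a multi-time function. -/
def jet {m N : ℕ} (x : (Fin m → ℝ) → (Fin N → ℝ)) (t : Fin m → ℝ) :
    Fin m → Fin N → ℝ :=
  fun β => pdv x β t

/-- Gradient `∂L/∂x` of a Lagrangian `L(x, v_1, …, v_m)` in the `x`-slot. -/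
def gradX {m N : ℕ} (L : (Fin N → ℝ) → (Fin m → (Fin N → ℝ)) → ℝ)
    (a : Fin N → ℝ) (V : Fin m → (Fin N → ℝ)) : Fin N → ℝ :=
  fun j => fderiv ℝ (fun a' => L a' V) a (Pi.single j 1)

/-- Gradient `∂L/∂v_β` of a Lagrangian `L(x, v_1, …, v_m)` in the `v_β`-slot. -/
def gradV {m N : ℕ} (L : (Fin N → ℝ) → (Fin m → (Fin N → ℝ)) → ℝ)
    (β : Fin m) (a : Fin N → ℝ) (V : Fin m → (Fin N → ℝ)) : Fin N → ℝ :=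
  fun j => fderiv ℝ (fun w => L a (Function.update V β w)) (V β) (Pi.single j 1)

/-- Gradient `∂H/∂x` of a function `H(x,p)` on phase space, in the `x`-slot. -/
def gradQ {N : ℕ} (H : (Fin N → ℝ) → (Fin N → ℝ) → ℝ) (a b : Fin N → ℝ) : Fin N → ℝ :=
  fun j => fderiv ℝ (fun a' => H a' b) a (Pi.single j 1)

/-- Gradient `∂H/∂p` of a function `H(x,p)` on phase space, in the `p`-slot. -/
def gradP {N : ℕ} (H : (Fin N → ℝ) → (Fin N → ℝ) → ℝ) (a b : Fin N → ℝ) : Fin N → ℝ :=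
  fun j => fderiv ℝ (fun b' => H a b') b (Pi.single j 1)

/-- Canonical Poisson bracket `{F,G} = ⟨∂F/∂x, ∂G/∂p⟩ − ⟨∂F/∂p, ∂G/∂x⟩`. -/
def poisson {N : ℕ} (F G : (Fin N → ℝ) → (Fin N → ℝ) → ℝ) (a b : Fin N → ℝ) : ℝ :=
  ∑ j, (gradQ F a b j * gradP G a b j - gradP F a b j * gradQ G a b j)

section Aux

variable {m N : ℕ}

lemma pi_decomp (w : Fin m → Fin N → ℝ) :
    w = ∑ γ, ∑ k, w γ k • (Pi.single γ (Pi.single k (1:ℝ)) : Fin m → Fin N → ℝ) := by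
  funext γ' k'
  simp [Finset.sum_apply, Pi.single_apply, apply_ite (fun f : Fin N → ℝ => f k'),
    Finset.sum_ite_eq, mul_ite]

lemma clm_apply_eq_sum (ℓ : (Fin m → Fin N → ℝ) →L[ℝ] ℝ) (w : Fin m → Fin N → ℝ) :
    ℓ w = ∑ γ, ∑ k, w γ k * ℓ (Pi.single γ (Pi.single k 1)) := by
  conv_lhs => rw [pi_decomp w]
  rw [map_sum]
  refine Finset.sum_congr rfl fun γ _ => ?_
  rw [map_sum]
  refine Finset.sum_congr rfl fun k _ => ?_
  rw [map_smul]; simp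

lemma pi_clm_single (β : Fin m) (u : Fin N → ℝ) :
    (ContinuousLinearMap.pi (Pi.single β (ContinuousLinearMap.id ℝ (Fin N → ℝ)))) u
      = (Pi.single β u : Fin m → Fin N → ℝ) := by
  funext γ
  by_cases h : γ = β <;>
    simp [ContinuousLinearMap.pi_apply, Pi.single_apply, h]

lemma gradV_eq (L : (Fin N → ℝ) → (Fin m → (Fin N → ℝ)) → ℝ)
    (hL : Differentiable ℝ (fun q : (Fin N → ℝ) × (Fin m → (Fin N → ℝ)) => L q.1 q.2))
    (a : Fin N → ℝ) (Vv : Fin m → (Fin N → ℝ)) (β : Fin m) (k : Fin N) :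
    gradV L β a Vv k
      = fderiv ℝ (fun q : (Fin N → ℝ) × (Fin m → (Fin N → ℝ)) => L q.1 q.2) (a, Vv)
          (0, Pi.single β (Pi.single k 1)) := by
  set DL := fderiv ℝ (fun q : (Fin N → ℝ) × (Fin m → (Fin N → ℝ)) => L q.1 q.2) (a, Vv)
  have h1 : HasFDerivAt (fun w : Fin N → ℝ => (a, Function.update Vv β w))
      ((0 : (Fin N → ℝ) →L[ℝ] (Fin N → ℝ)).prod
        (ContinuousLinearMap.pi (Pi.single β (ContinuousLinearMap.id ℝ (Fin N → ℝ))))) (Vv β) :=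
    HasFDerivAt.prodMk (hasFDerivAt_const a _) (hasFDerivAt_update Vv (Vv β))
  have h2 : HasFDerivAt (fun q : (Fin N → ℝ) × (Fin m → (Fin N → ℝ)) => L q.1 q.2) DL
      (a, Function.update Vv β (Vv β)) := by
    rw [Function.update_eq_self]
    exact (hL (a, Vv)).hasFDerivAt
  have h3 : HasFDerivAt (fun w : Fin N → ℝ => L a (Function.update Vv β w))
      (DL.comp (((0 : (Fin N → ℝ) →L[ℝ] (Fin N → ℝ)).prod
        (ContinuousLinearMap.pi (Pi.single β (ContinuousLinearMap.id ℝ (Fin N → ℝ)))))))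
      (Vv β) := by have := h2.comp (Vv β) h1; exact this
  have : gradV L β a Vv k
      = (DL.comp (((0 : (Fin N → ℝ) →L[ℝ] (Fin N → ℝ)).prod
        (ContinuousLinearMap.pi (Pi.single β (ContinuousLinearMap.id ℝ (Fin N → ℝ))))))
        (Pi.single k 1)) := by
    unfold gradV
    rw [h3.fderiv]
  rw [this]
  simp only [ContinuousLinearMap.comp_apply, ContinuousLinearMap.prod_apply,
    ContinuousLinearMap.zero_apply, pi_clm_single]

lemma gradX_eq (L : (Fin N → ℝ) → (Fin m → (Fin N → ℝ)) → ℝ)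
    (hL : Differentiable ℝ (fun q : (Fin N → ℝ) × (Fin m → (Fin N → ℝ)) => L q.1 q.2))
    (a : Fin N → ℝ) (Vv : Fin m → (Fin N → ℝ)) (j : Fin N) :
    gradX L a Vv j = fderiv ℝ (fun q : (Fin N → ℝ) × (Fin m → (Fin N → ℝ)) => L q.1 q.2) (a, Vv)
      (Pi.single j 1, 0) := by
  set DL := fderiv ℝ (fun q : (Fin N → ℝ) × (Fin m → (Fin N → ℝ)) => L q.1 q.2) (a, Vv)
  have h1 : HasFDerivAt (fun a' : Fin N → ℝ => (a', Vv))
      ((ContinuousLinearMap.id ℝ (Fin N → ℝ)).prod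
        (0 : (Fin N → ℝ) →L[ℝ] (Fin m → Fin N → ℝ))) a :=
    HasFDerivAt.prodMk (hasFDerivAt_id a) (hasFDerivAt_const Vv a)
  have h2 : HasFDerivAt (fun q : (Fin N → ℝ) × (Fin m → (Fin N → ℝ)) => L q.1 q.2) DL (a, Vv) :=
    (hL (a, Vv)).hasFDerivAt
  have h3 : HasFDerivAt (fun a' : Fin N → ℝ => L a' Vv)
      (DL.comp ((ContinuousLinearMap.id ℝ (Fin N → ℝ)).prod
        (0 : (Fin N → ℝ) →L[ℝ] (Fin m → Fin N → ℝ)))) a := by have := h2.comp a h1; exact this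
  unfold gradX
  rw [h3.fderiv]
  simp

end Aux

/-- If the multi-time Lagrangian 1-form is Legendre transformable, with
solving functions `V_α` and Hamilton functions `H_α(x,p) = ⟨p, V_α(x,p)⟩ − L_α(x, V(x,p))`,
then every solution `(x,p)` of the multi-time Euler–Lagrange equations satisfies the
Hamiltonian equations of motion. -/
theorem hamiltonian_of_EL {m N : ℕ}
    (L : Fin m → (Fin N → ℝ) → (Fin m → (Fin N → ℝ)) → ℝ)
    (hL : ∀ α, ContDiff ℝ (⊤ : ℕ∞)
      (fun q : (Fin N → ℝ) × (Fin m → (Fin N → ℝ)) => L α q.1 q.2))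
    (V : Fin m → (Fin N → ℝ) → (Fin N → ℝ) → (Fin N → ℝ))
    (hV : ∀ α, ContDiff ℝ (⊤ : ℕ∞)
      (fun q : (Fin N → ℝ) × (Fin N → ℝ) => V α q.1 q.2))
    (hLeg1 : ∀ (a b : Fin N → ℝ) (α β : Fin m), α ≠ β →
      gradV (L α) β a (fun γ => V γ a b) = 0)
    (hLeg2 : ∀ (a b : Fin N → ℝ) (α : Fin m),
      gradV (L α) α a (fun γ => V γ a b) = b)
    (H : Fin m → (Fin N → ℝ) → (Fin N → ℝ) → ℝ)
    (hH : ∀ (α : Fin m) (a b : Fin N → ℝ),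
      H α a b = (∑ j, b j * V α a b j) - L α a (fun γ => V γ a b))
    (x p : (Fin m → ℝ) → (Fin N → ℝ))
    (hx : ContDiff ℝ (⊤ : ℕ∞) x) (hp : ContDiff ℝ (⊤ : ℕ∞) p)
    (hEL1 : ∀ (t : Fin m → ℝ) (α : Fin m), pdv x α t = V α (x t) (p t))
    (hEL2 : ∀ (t : Fin m → ℝ) (α : Fin m), pdv p α t = gradX (L α) (x t) (jet x t)) :
    ∀ (t : Fin m → ℝ) (α : Fin m),
      pdv x α t = gradP (H α) (x t) (p t) ∧
      pdv p α t = -gradQ (H α) (x t) (p t) := by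
  intro t α
  have hLd : ∀ α', Differentiable ℝ
      (fun q : (Fin N → ℝ) × (Fin m → (Fin N → ℝ)) => L α' q.1 q.2) :=
    fun α' => (hL α').differentiable (by simp)
  have hVd : ∀ γ, Differentiable ℝ
      (fun q : (Fin N → ℝ) × (Fin N → ℝ) => V γ q.1 q.2) :=
    fun γ => (hV γ).differentiable (by simp)
  set a := x t with ha
  set b := p t with hb
  -- total derivative of L α at (a, V·(a,b))
  set DL := fderiv ℝ (fun q : (Fin N → ℝ) × (Fin m → (Fin N → ℝ)) => L α q.1 q.2)
      (a, fun γ => V γ a b) with hDLdef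
  have hDLat : HasFDerivAt (fun q : (Fin N → ℝ) × (Fin m → (Fin N → ℝ)) => L α q.1 q.2)
      DL (a, fun γ => V γ a b) := (hLd α _).hasFDerivAt
  -- the Legendre property in terms of DL
  have key : ∀ w : Fin m → Fin N → ℝ, DL (0, w) = ∑ k, w α k * b k := by
    intro w
    have hsingle : ∀ (γ : Fin m) (k : Fin N),
        DL (0, Pi.single γ (Pi.single k 1)) = if γ = α then b k else 0 := by
      intro γ k
      have h := gradV_eq (L α) (hLd α) a (fun γ => V γ a b) γ k
      rw [← hDLdef] at h
      rcases eq_or_ne γ α with h' | h'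
      · subst h'
        rw [if_pos rfl, ← h]
        exact congrFun (hLeg2 a b γ) k
      · rw [if_neg h', ← h]
        exact congrFun (hLeg1 a b α γ (Ne.symm h')) k
    have : DL (0, w) = (DL.comp (ContinuousLinearMap.inr ℝ (Fin N → ℝ) (Fin m → Fin N → ℝ))) w :=
      rfl
    rw [this, clm_apply_eq_sum]
    simp only [ContinuousLinearMap.comp_apply, ContinuousLinearMap.inr_apply, hsingle]
    simp [mul_ite, Finset.sum_ite_eq']
  constructor
  · -- Hamilton equation for x
    have hDVbdiff : ∀ γ, DifferentiableAt ℝ (fun b' => V γ a b') b := fun γ => by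
      have h1 : DifferentiableAt ℝ (fun b' : Fin N → ℝ => ((a, b') : (Fin N → ℝ) × (Fin N → ℝ))) b :=
        DifferentiableAt.prodMk (differentiableAt_const a) differentiableAt_id
      have h2 := DifferentiableAt.comp (𝕜 := ℝ) b (hVd γ (a, b)) h1
      exact h2
    set DVb : (γ : Fin m) → (Fin N → ℝ) →L[ℝ] (Fin N → ℝ) :=
      fun γ => fderiv ℝ (fun b' => V γ a b') b with hDVbdef
    have hDVb : ∀ γ, HasFDerivAt (fun b' => V γ a b') (DVb γ) b :=
      fun γ => (hDVbdiff γ).hasFDerivAt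
    have hT1 : HasFDerivAt (fun b' : Fin N → ℝ => ∑ k, b' k * V α a b' k)
        (∑ k, (b k • ((ContinuousLinearMap.proj k).comp (DVb α))
          + V α a b k • (ContinuousLinearMap.proj k : (Fin N → ℝ) →L[ℝ] ℝ))) b :=
      HasFDerivAt.fun_sum fun k _ =>
        (hasFDerivAt_apply k b).mul ((hasFDerivAt_pi'.1 (hDVb α)) k)
    have hinner : HasFDerivAt
        (fun b' : Fin N → ℝ =>
          ((a, fun γ => V γ a b') : (Fin N → ℝ) × (Fin m → Fin N → ℝ)))
        ((0 : (Fin N → ℝ) →L[ℝ] (Fin N → ℝ)).prod (ContinuousLinearMap.pi DVb)) b :=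
      HasFDerivAt.prodMk (hasFDerivAt_const a b) (hasFDerivAt_pi.2 hDVb)
    have hT2 : HasFDerivAt (fun b' : Fin N → ℝ => L α a (fun γ => V γ a b'))
        (DL.comp ((0 : (Fin N → ℝ) →L[ℝ] (Fin N → ℝ)).prod (ContinuousLinearMap.pi DVb))) b :=
      by have := hDLat.comp b hinner; exact this
    have hHb : HasFDerivAt (fun b' => H α a b')
        ((∑ k, (b k • ((ContinuousLinearMap.proj k).comp (DVb α))
          + V α a b k • (ContinuousLinearMap.proj k : (Fin N → ℝ) →L[ℝ] ℝ)))
         - DL.comp ((0 : (Fin N → ℝ) →L[ℝ] (Fin N → ℝ)).prod (ContinuousLinearMap.pi DVb))) b := by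
      have heq : (fun b' => H α a b')
          = fun b' => (∑ k, b' k * V α a b' k) - L α a (fun γ => V γ a b') :=
        funext fun b' => hH α a b'
      rw [heq]
      exact hT1.sub hT2
    funext j
    rw [hEL1 t α]
    show V α a b j = gradP (H α) a b j
    unfold gradP
    rw [hHb.fderiv]
    have hpi : (ContinuousLinearMap.pi DVb) (Pi.single j 1) = fun γ => DVb γ (Pi.single j 1) :=
      rfl
    rw [ContinuousLinearMap.sub_apply, ContinuousLinearMap.comp_apply,
      ContinuousLinearMap.prod_apply, ContinuousLinearMap.zero_apply, hpi, key]
    simp only [ContinuousLinearMap.sum_apply, ContinuousLinearMap.add_apply,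
      ContinuousLinearMap.smul_apply, ContinuousLinearMap.comp_apply,
      ContinuousLinearMap.proj_apply, smul_eq_mul]
    rw [Finset.sum_add_distrib]
    simp [Pi.single_apply, mul_ite, Finset.sum_ite_eq', mul_comm]
  · -- Hamilton equation for p
    have hDVadiff : ∀ γ, DifferentiableAt ℝ (fun a' => V γ a' b) a := fun γ => by
      have h1 : DifferentiableAt ℝ (fun a' : Fin N → ℝ => ((a', b) : (Fin N → ℝ) × (Fin N → ℝ))) a :=
        differentiableAt_id.prodMk (differentiableAt_const b)
      have h2 := DifferentiableAt.comp (𝕜 := ℝ) a (hVd γ (a, b)) h1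
      exact h2
    set DVa : (γ : Fin m) → (Fin N → ℝ) →L[ℝ] (Fin N → ℝ) :=
      fun γ => fderiv ℝ (fun a' => V γ a' b) a with hDVadef
    have hDVa : ∀ γ, HasFDerivAt (fun a' => V γ a' b) (DVa γ) a :=
      fun γ => (hDVadiff γ).hasFDerivAt
    have hS1 : HasFDerivAt (fun a' : Fin N → ℝ => ∑ k, b k * V α a' b k)
        (∑ k, b k • ((ContinuousLinearMap.proj k).comp (DVa α))) a :=
      HasFDerivAt.fun_sum fun k _ => ((hasFDerivAt_pi'.1 (hDVa α)) k).const_mul (b k)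
    have hinner : HasFDerivAt
        (fun a' : Fin N → ℝ =>
          ((a', fun γ => V γ a' b) : (Fin N → ℝ) × (Fin m → Fin N → ℝ)))
        ((ContinuousLinearMap.id ℝ (Fin N → ℝ)).prod (ContinuousLinearMap.pi DVa)) a :=
      HasFDerivAt.prodMk (hasFDerivAt_id a) (hasFDerivAt_pi.2 hDVa)
    have hS2 : HasFDerivAt (fun a' : Fin N → ℝ => L α a' (fun γ => V γ a' b))
        (DL.comp ((ContinuousLinearMap.id ℝ (Fin N → ℝ)).prod (ContinuousLinearMap.pi DVa))) a :=
      by have := hDLat.comp a hinner; exact this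
    have hHa : HasFDerivAt (fun a' => H α a' b)
        ((∑ k, b k • ((ContinuousLinearMap.proj k).comp (DVa α)))
         - DL.comp ((ContinuousLinearMap.id ℝ (Fin N → ℝ)).prod (ContinuousLinearMap.pi DVa))) a := by
      have heq : (fun a' => H α a' b)
          = fun a' => (∑ k, b k * V α a' b k) - L α a' (fun γ => V γ a' b) :=
        funext fun a' => hH α a' b
      rw [heq]
      exact hS1.sub hS2
    have hjet : jet x t = fun γ => V γ a b := funext fun γ => hEL1 t γ
    funext j
    rw [hEL2 t α, hjet]
    show gradX (L α) a (fun γ => V γ a b) j = (-gradQ (H α) a b) j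
    rw [Pi.neg_apply]
    unfold gradQ
    rw [hHa.fderiv]
    rw [ContinuousLinearMap.sub_apply, ContinuousLinearMap.comp_apply,
      ContinuousLinearMap.prod_apply, ContinuousLinearMap.id_apply]
    have hpi : (ContinuousLinearMap.pi DVa) (Pi.single j 1)
        = fun γ => DVa γ (Pi.single j 1) := rfl
    rw [hpi]
    have hsplit : DL (Pi.single j 1, fun γ => DVa γ (Pi.single j 1))
        = DL (Pi.single j 1, 0) + DL (0, fun γ => DVa γ (Pi.single j 1)) := by
      rw [← map_add]
      congr 1
      simp
    rw [hsplit, key]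
    have hgx : DL (Pi.single j 1, 0) = gradX (L α) a (fun γ => V γ a b) j := by
      rw [hDLdef]
      exact (gradX_eq (L α) (hLd α) a (fun γ => V γ a b) j).symm
    rw [hgx]
    simp only [ContinuousLinearMap.sum_apply, ContinuousLinearMap.smul_apply,
      ContinuousLinearMap.comp_apply, ContinuousLinearMap.proj_apply, smul_eq_mul]
    have hc : ∑ k, (DVa α) (Pi.single j 1) k * b k
        = ∑ k, b k * (DVa α) (Pi.single j 1) k :=
      Finset.sum_congr rfl fun k _ => mul_comm _ _
    rw [hc]
    ring
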